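/- Under the joint threshold-based policy (both nodes act only when simultaneously B_S^t ≥ P_S and B_D^t ≥ P_D), with infinite batteries and stationary ergodic energy arrivals with means λ_S, λ_D, the simultaneous transmit-and-receive probability satisfies Ψ(P_S, P_D) ≤ min(λ_S/P_S, λ_D/P_D), and if max(λ_S/P_S, λ_D/P_D) < 1 then Ψ(P_S, P_D) = min(λ_S/P_S, λ_D/P_D). -/

import Mathlib

open MeasureTheory Filter

section Birkhoff
variable {Ω : Type*} [MeasurableSpace Ω] {μ : Measure Ω} [IsProbabilityMeasure μ]
  {T : Ω → Ω} {g : Ω → ℝ}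

/-- Birkhoff sums `∑_{i<n} g (T^i ω)`. -/
def bsum (T : Ω → Ω) (g : Ω → ℝ) (n : ℕ) (ω : Ω) : ℝ := ∑ i ∈ Finset.range n, g (T^[i] ω)

/-- Running maxima `max_{0 ≤ k ≤ n} S_k`. -/
def mphi (T : Ω → Ω) (g : Ω → ℝ) : ℕ → Ω → ℝ
  | 0 => fun _ => 0
  | n + 1 => fun ω => max 0 (g ω + mphi T g n (T ω))

lemma bsum_succ (n : ℕ) (ω : Ω) : bsum T g (n + 1) ω = g ω + bsum T g n (T ω) := by
  unfold bsum
  rw [Finset.sum_range_succ']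
  simp [Function.iterate_succ_apply, add_comm]

lemma mphi_nonneg (n : ℕ) (ω : Ω) : 0 ≤ mphi T g n ω := by
  cases n with
  | zero => simp [mphi]
  | succ n => simp [mphi]

lemma mphi_mono (n : ℕ) (ω : Ω) : mphi T g n ω ≤ mphi T g (n + 1) ω := by
  induction n generalizing ω with
  | zero => simp [mphi]
  | succ n ih =>
      simp only [mphi]
      refine max_le (le_max_left _ _) (le_max_of_le_right ?_)
      exact add_le_add (le_refl _) (ih (T ω))

lemma mphi_mono_le {m n : ℕ} (h : m ≤ n) (ω : Ω) : mphi T g m ω ≤ mphi T g n ω := by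
  induction n with
  | zero => simp_all
  | succ n ih =>
      rcases Nat.lt_or_ge m (n+1) with h' | h'
      · exact (ih (by omega)).trans (mphi_mono n ω)
      · have : m = n + 1 := by omega
        simp [this]

lemma bsum_le_mphi (n : ℕ) (ω : Ω) : bsum T g n ω ≤ mphi T g n ω := by
  induction n generalizing ω with
  | zero => simp [bsum, mphi]
  | succ n ih =>
      rw [bsum_succ]
      exact le_max_of_le_right (by linarith [ih (T ω)]) |>.trans_eq rfl

lemma mphi_measurable (hT : Measurable T) (hg : Measurable g) (n : ℕ) :
    Measurable (mphi T g n) := by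
  induction n with
  | zero => simpa [mphi] using measurable_const
  | succ n ih => exact measurable_const.max (hg.add (ih.comp hT))

lemma comp_T_integrable (hT : MeasurePreserving T μ μ) {f : Ω → ℝ}
    (hfm : Measurable f) (hfi : Integrable f μ) : Integrable (fun ω => f (T ω)) μ := by
  have h1 : Integrable f (Measure.map T μ) := by rwa [hT.map_eq]
  have h2 : AEStronglyMeasurable f (Measure.map T μ) := by
    rw [hT.map_eq]; exact hfm.aestronglyMeasurable
  exact (integrable_map_measure h2 hT.measurable.aemeasurable).mp h1

lemma integral_comp_T (hT : MeasurePreserving T μ μ) {f : Ω → ℝ}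
    (hfm : Measurable f) : ∫ ω, f (T ω) ∂μ = ∫ ω, f ω ∂μ := by
  rw [← integral_map hT.measurable.aemeasurable]
  · rw [hT.map_eq]
  · rw [hT.map_eq]; exact hfm.aestronglyMeasurable

lemma mphi_integrable (hT : MeasurePreserving T μ μ) (hgm : Measurable g)
    (hgi : Integrable g μ) (n : ℕ) : Integrable (mphi T g n) μ := by
  induction n with
  | zero => simpa [mphi] using integrable_const (0:ℝ)
  | succ n ih =>
      have h1 : Integrable (fun ω => mphi T g n (T ω)) μ :=
        comp_T_integrable hT (mphi_measurable hT.measurable hgm n) ih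
      have : Integrable (fun ω => g ω + mphi T g n (T ω)) μ := hgi.add h1
      show Integrable (fun ω => max 0 (g ω + mphi T g n (T ω))) μ
      exact (integrable_const (0:ℝ)).sup this

end Birkhoff

section Birkhoff2
set_option linter.unusedSectionVars false
variable {Ω : Type*} [MeasurableSpace Ω] {μ : Measure Ω} [IsProbabilityMeasure μ]
  {T : Ω → Ω} {g : Ω → ℝ}

/-- Maximal ergodic theorem, Garsia's proof. -/
lemma maximal_ergodic (hT : MeasurePreserving T μ μ) (hgm : Measurable g)
    (hgi : Integrable g μ) (n : ℕ) :
    0 ≤ ∫ ω, Set.indicator {ω | 0 < mphi T g (n+1) ω} g ω ∂μ := by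
  set E : Set Ω := {ω | 0 < mphi T g (n+1) ω} with hE
  have hEm : MeasurableSet E := measurableSet_lt measurable_const (mphi_measurable hT.measurable hgm (n+1))
  have key : ∀ ω, mphi T g (n+1) ω - mphi T g (n+1) (T ω) ≤ Set.indicator E g ω := by
    intro ω
    by_cases hω : ω ∈ E
    · rw [Set.indicator_of_mem hω]
      have h1 : mphi T g (n+1) ω = g ω + mphi T g n (T ω) := by
        have := hω
        simp only [hE, Set.mem_setOf_eq, mphi] at this
        simp only [mphi]
        rcases max_cases (0:ℝ) (g ω + mphi T g n (T ω)) with ⟨h, _⟩ | ⟨h, _⟩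
        · rw [h] at this; exact absurd this (lt_irrefl 0)
        · exact h
      have h2 : mphi T g n (T ω) ≤ mphi T g (n+1) (T ω) := mphi_mono n (T ω)
      linarith
    · rw [Set.indicator_of_notMem hω]
      have h1 : mphi T g (n+1) ω ≤ 0 := by
        simp only [hE, Set.mem_setOf_eq, not_lt] at hω
        exact hω
      have h2 : 0 ≤ mphi T g (n+1) (T ω) := mphi_nonneg _ _
      linarith
  have hphi_int : Integrable (mphi T g (n+1)) μ := mphi_integrable hT hgm hgi (n+1)
  have hphiT_int : Integrable (fun ω => mphi T g (n+1) (T ω)) μ :=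
    comp_T_integrable hT (mphi_measurable hT.measurable hgm (n+1)) hphi_int
  have hind_int : Integrable (Set.indicator E g) μ := hgi.indicator hEm
  have h3 : ∫ ω, (mphi T g (n+1) ω - mphi T g (n+1) (T ω)) ∂μ ≤ ∫ ω, Set.indicator E g ω ∂μ :=
    integral_mono (hphi_int.sub hphiT_int) hind_int key
  have h4 : ∫ ω, (mphi T g (n+1) ω - mphi T g (n+1) (T ω)) ∂μ = 0 := by
    rw [integral_sub hphi_int hphiT_int,
      integral_comp_T hT (mphi_measurable hT.measurable hgm (n+1)), sub_self]
  linarith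

/-- If `∫ g < 0` then a.e. the Birkhoff sums of `g` are bounded above. -/
lemma birkhoff_upper (hT : Ergodic T μ) (hgm : Measurable g) (hgi : Integrable g μ)
    (hneg : ∫ ω, g ω ∂μ < 0) :
    ∀ᵐ ω ∂μ, ∃ C : ℝ, ∀ n, bsum T g n ω ≤ C := by
  classical
  set A : Set Ω := {ω | ∀ C : ℝ, ∃ n, C < bsum T g n ω} with hA
  have hbm : ∀ n, Measurable (bsum T g n) := by
    intro n
    apply Finset.measurable_sum
    intro i _
    exact hgm.comp (hT.measurable.iterate i)
  have hAm : MeasurableSet A := by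
    have : A = ⋂ (q : ℚ), ⋃ (n : ℕ), {ω | (q:ℝ) < bsum T g n ω} := by
      ext ω
      simp only [hA, Set.mem_setOf_eq, Set.mem_iInter, Set.mem_iUnion]
      constructor
      · intro h q; exact h q
      · intro h C
        obtain ⟨q, hq⟩ := exists_rat_gt C
        obtain ⟨n, hn⟩ := h q
        exact ⟨n, hq.trans hn⟩
    rw [this]
    exact MeasurableSet.iInter fun q => MeasurableSet.iUnion fun n =>
      measurableSet_lt measurable_const (hbm n)
  have hAinv : T ⁻¹' A = A := by
    ext ω
    simp only [Set.mem_preimage, hA, Set.mem_setOf_eq]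
    constructor
    · intro h C
      obtain ⟨n, hn⟩ := h (C - g ω)
      exact ⟨n + 1, by rw [bsum_succ]; linarith⟩
    · intro h C
      obtain ⟨n, hn⟩ := h (max (C + g ω) 0)
      have hn0 : n ≠ 0 := by
        intro h0
        rw [h0] at hn
        simp only [bsum, Finset.range_zero, Finset.sum_empty] at hn
        have := le_max_right (C + g ω) 0
        linarith
      obtain ⟨m, rfl⟩ := Nat.exists_eq_succ_of_ne_zero hn0
      refine ⟨m, ?_⟩
      rw [bsum_succ] at hn
      have := le_max_left (C + g ω) 0
      linarith
  rcases hT.ae_empty_or_univ hAm hAinv with h | h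
  · -- μ A = 0
    have : ∀ᵐ ω ∂μ, ω ∉ A := by
      have hz : μ A = 0 := by
        have : μ A = μ (∅ : Set Ω) := measure_congr h
        simpa using this
      exact measure_eq_zero_iff_ae_notMem.mp hz
    filter_upwards [this] with ω hω
    simp only [hA, Set.mem_setOf_eq, not_forall, not_exists, not_lt] at hω
    exact hω
  · -- μ A = 1 : contradiction
    exfalso
    set E : Set Ω := ⋃ n, {ω | 0 < mphi T g (n+1) ω} with hEdef
    have hEm : ∀ n : ℕ, MeasurableSet {ω | 0 < mphi T g (n+1) ω} := fun n =>
      measurableSet_lt measurable_const (mphi_measurable hT.measurable hgm (n+1))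
    have hAE : A ⊆ E := by
      intro ω hω
      obtain ⟨n, hn⟩ := hω 0
      have hn' : 0 < mphi T g n ω := lt_of_lt_of_le hn (bsum_le_mphi n ω)
      have hn0 : n ≠ 0 := by
        intro h0; rw [h0] at hn'; simp [mphi] at hn'
      obtain ⟨m, rfl⟩ := Nat.exists_eq_succ_of_ne_zero hn0
      exact Set.mem_iUnion.mpr ⟨m, hn'⟩
    -- ∫_E g ≥ 0 by dominated convergence from maximal ergodic
    have hmono : ∀ n ω, Set.indicator {ω | 0 < mphi T g (n+1) ω} g ω =
        Set.indicator {ω | 0 < mphi T g (n+1) ω} g ω := fun _ _ => rfl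
    have htend : ∀ ω, Tendsto (fun n => Set.indicator {ω | 0 < mphi T g (n+1) ω} g ω) atTop
        (nhds (Set.indicator E g ω)) := by
      intro ω
      by_cases hω : ω ∈ E
      · obtain ⟨n0, hn0⟩ := Set.mem_iUnion.mp hω
        rw [Set.indicator_of_mem hω]
        apply tendsto_atTop_of_eventually_const (i₀ := n0)
        intro n hn
        have : ω ∈ {ω | 0 < mphi T g (n+1) ω} :=
          lt_of_lt_of_le hn0 (mphi_mono_le (by omega) ω)
        rw [Set.indicator_of_mem this]
      · rw [Set.indicator_of_notMem hω]
        have : ∀ n : ℕ, ω ∉ {ω | 0 < mphi T g (n+1) ω} := by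
          intro n hc
          exact hω (Set.mem_iUnion.mpr ⟨n, hc⟩)
        apply tendsto_atTop_of_eventually_const (i₀ := 0)
        intro n _
        rw [Set.indicator_of_notMem (this n)]
    have hlim : Tendsto (fun n => ∫ ω, Set.indicator {ω | 0 < mphi T g (n+1) ω} g ω ∂μ) atTop
        (nhds (∫ ω, Set.indicator E g ω ∂μ)) := by
      apply tendsto_integral_of_dominated_convergence (fun ω => |g ω|)
      · intro n
        exact (hgm.indicator (hEm n)).aestronglyMeasurable
      · exact hgi.abs
      · intro n
        filter_upwards with ω
        rw [Real.norm_eq_abs]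
        classical
        by_cases hm : ω ∈ {ω | 0 < mphi T g (n+1) ω}
        · rw [Set.indicator_of_mem hm]
        · rw [Set.indicator_of_notMem hm]; simp [abs_nonneg]
      · filter_upwards with ω using htend ω
    have hEnonneg : 0 ≤ ∫ ω, Set.indicator E g ω ∂μ :=
      le_of_tendsto_of_tendsto' tendsto_const_nhds hlim
        (fun n => maximal_ergodic hT.toMeasurePreserving hgm hgi n)
    -- but E has full measure so ∫_E g = ∫ g < 0
    have hAfull : μ Aᶜ = 0 := by
      have : μ A = μ (Set.univ : Set Ω) := measure_congr h
      rw [measure_compl hAm (measure_ne_top μ A), this]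
      simp
    have hEfull : μ Eᶜ = 0 := measure_mono_null (Set.compl_subset_compl.mpr hAE) hAfull
    have : ∫ ω, Set.indicator E g ω ∂μ = ∫ ω, g ω ∂μ := by
      apply integral_congr_ae
      filter_upwards [measure_eq_zero_iff_ae_notMem.mp hEfull] with ω hω
      have hω' : ω ∈ E := by
        by_contra hc; exact hω hc
      rw [Set.indicator_of_mem hω']
    linarith [this ▸ hEnonneg]

end Birkhoff2

section Birkhoff3
set_option linter.unusedSectionVars false
variable {Ω : Type*} [MeasurableSpace Ω] {μ : Measure Ω} [IsProbabilityMeasure μ]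
  {T : Ω → Ω} {g : Ω → ℝ}

lemma bsum_sub_const (c : ℝ) (n : ℕ) (ω : Ω) :
    bsum T (fun ω => g ω - c) n ω = bsum T g n ω - n * c := by
  simp [bsum, Finset.sum_sub_distrib]

lemma bsum_const_sub (c : ℝ) (n : ℕ) (ω : Ω) :
    bsum T (fun ω => c - g ω) n ω = n * c - bsum T g n ω := by
  simp [bsum, Finset.sum_sub_distrib]

/-- Pointwise Birkhoff ergodic theorem (ergodic case). -/
theorem birkhoff_ae (hT : Ergodic T μ) (hgm : Measurable g) (hgi : Integrable g μ) :
    ∀ᵐ ω ∂μ, Tendsto (fun n => bsum T g n ω / n) atTop (nhds (∫ ω, g ω ∂μ)) := by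
  set m := ∫ ω, g ω ∂μ with hm
  have hup : ∀ k : ℕ, ∀ᵐ ω ∂μ, ∃ C : ℝ, ∀ n : ℕ,
      bsum T g n ω ≤ n * (m + 1/(k+1)) + C := by
    intro k
    have hki : (0:ℝ) < 1/(k+1) := by positivity
    have := birkhoff_upper (g := fun ω => g ω - (m + 1/(k+1))) hT
      (hgm.sub measurable_const) (hgi.sub (integrable_const _))
      (by rw [integral_sub hgi (integrable_const _)]
          simp [hm]
          linarith)
    filter_upwards [this] with ω ⟨C, hC⟩
    refine ⟨C, fun n => ?_⟩
    have := hC n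
    rw [bsum_sub_const] at this
    linarith
  have hdown : ∀ k : ℕ, ∀ᵐ ω ∂μ, ∃ C : ℝ, ∀ n : ℕ,
      n * (m - 1/(k+1)) - C ≤ bsum T g n ω := by
    intro k
    have hki : (0:ℝ) < 1/(k+1) := by positivity
    have := birkhoff_upper (g := fun ω => (m - 1/(k+1)) - g ω) hT
      (measurable_const.sub hgm) ((integrable_const _).sub hgi)
      (by rw [integral_sub (integrable_const _) hgi]
          simp [hm]
          linarith)
    filter_upwards [this] with ω ⟨C, hC⟩
    refine ⟨C, fun n => ?_⟩
    have := hC n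
    rw [bsum_const_sub] at this
    linarith
  filter_upwards [(ae_all_iff).mpr hup, (ae_all_iff).mpr hdown] with ω h1 h2
  rw [Metric.tendsto_atTop]
  intro ε hε
  obtain ⟨k, hk⟩ := exists_nat_gt (2/ε)
  have hk' : 1/((k:ℝ)+1) < ε/2 := by
    rw [div_lt_iff₀ (by positivity)]
    have h2 : (2:ℝ) < k * ε := (div_lt_iff₀ hε).mp hk
    nlinarith
  obtain ⟨C1, hC1⟩ := h1 k
  obtain ⟨C2, hC2⟩ := h2 k
  set C := max (max C1 C2) 0 with hC
  obtain ⟨N, hN⟩ := exists_nat_gt (C/(ε/2))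
  refine ⟨N + 1, fun n hn => ?_⟩
  have hn1 : (1:ℝ) ≤ n := by
    have : 1 ≤ n := le_trans (Nat.le_add_left 1 N) hn
    exact_mod_cast this
  have hnpos : (0:ℝ) < n := by linarith
  have hCn : C < (ε/2) * n := by
    have hNn : (N:ℝ) < n := by exact_mod_cast Nat.lt_of_lt_of_le (Nat.lt_succ_self N) hn
    have := (div_lt_iff₀ (by positivity : (0:ℝ) < ε/2)).mp hN
    nlinarith [hε]
  have hd1 := hC1 n
  have hd2 := hC2 n
  have hCC1 : C1 ≤ C := le_trans (le_max_left _ _) (le_max_left _ _)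
  have hCC2 : C2 ≤ C := le_trans (le_max_right _ _) (le_max_left _ _)
  have hkn : (n:ℝ) * (1/(k+1)) ≤ n * (ε/2) :=
    mul_le_mul_of_nonneg_left (le_of_lt hk') (le_of_lt hnpos)
  rw [Real.dist_eq, abs_sub_lt_iff]
  constructor
  · rw [sub_lt_iff_lt_add, div_lt_iff₀ hnpos]
    nlinarith
  · rw [sub_lt_iff_lt_add, ← sub_lt_iff_lt_add']
    rw [lt_div_iff₀ hnpos]
    nlinarith
end Birkhoff3

section Queue
open Finset

lemma tele_aux {w z J : ℕ → ℝ} (hrec : ∀ t, 1 ≤ t → w (t+1) = w t - J t + z t) :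
    ∀ b n : ℕ, b ≤ n → w (n+1) = w (b+1) + (∑ t ∈ Icc (b+1) n, z t) - ∑ t ∈ Icc (b+1) n, J t := by
  intro b n hbn
  induction n with
  | zero =>
      have : b = 0 := Nat.le_zero.mp hbn
      subst this
      simp
  | succ n ih =>
      rcases Nat.lt_or_ge b (n+1) with h | h
      · have hb : b ≤ n := by omega
        have h1 : b + 1 ≤ n + 1 := by omega
        rw [Finset.sum_Icc_succ_top h1, Finset.sum_Icc_succ_top h1]
        rw [hrec (n+1) (by omega)]
        rw [ih hb]
        ring
      · have : b = n + 1 := by omega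
        subst this
        simp

lemma sum_Icc_split (f : ℕ → ℝ) : ∀ b n : ℕ, b ≤ n →
    ∑ t ∈ Icc 1 n, f t = (∑ t ∈ Icc 1 b, f t) + ∑ t ∈ Icc (b+1) n, f t := by
  intro b n hbn
  induction n with
  | zero =>
      have : b = 0 := Nat.le_zero.mp hbn
      subst this
      simp
  | succ n ih =>
      rcases Nat.lt_or_ge b (n+1) with h | h
      · have hb : b ≤ n := by omega
        rw [Finset.sum_Icc_succ_top (by omega : 1 ≤ n + 1),
          Finset.sum_Icc_succ_top (by omega : b + 1 ≤ n + 1), ih hb]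
        ring
      · have : b = n + 1 := by omega
        subst this
        simp

lemma sum_Icc_ones (I : ℕ → ℝ) {a n : ℕ} (ha : ∀ t, a ≤ t → t ≤ n → I t = 1) (han : a ≤ n + 1) :
    ∑ t ∈ Icc a n, I t = (n + 1 - a : ℕ) := by
  rw [Finset.sum_congr rfl (fun t ht => ha t (Finset.mem_Icc.mp ht).1 (Finset.mem_Icc.mp ht).2)]
  simp [Nat.card_Icc]

set_option maxHeartbeats 1000000 in
lemma queue_lemma (x y I u v : ℕ → ℝ) (hx : ∀ t, 0 ≤ x t) (hy : ∀ t, 0 ≤ y t)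
    (hu1 : u 1 = 0) (hv1 : v 1 = 0)
    (hI : ∀ t, I t = if 1 ≤ u t ∧ 1 ≤ v t then 1 else 0)
    (hurec : ∀ t, 1 ≤ t → u (t+1) = u t - I t + x t)
    (hvrec : ∀ t, 1 ≤ t → v (t+1) = v t - I t + y t)
    (rS rD : ℝ) (hrr : rS ≤ rD)
    (hX : Tendsto (fun n : ℕ => (∑ t ∈ Finset.Icc 1 n, x t) / n) atTop (nhds rS))
    (hY : Tendsto (fun n : ℕ => (∑ t ∈ Finset.Icc 1 n, y t) / n) atTop (nhds rD)) :
    Tendsto (fun n : ℕ => (∑ t ∈ Finset.Icc 1 n, I t) / n) atTop (nhds (min 1 rS)) := by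
  classical
  set X : ℕ → ℝ := fun n => ∑ t ∈ Icc 1 n, x t with hXdef
  set Y : ℕ → ℝ := fun n => ∑ t ∈ Icc 1 n, y t with hYdef
  set N : ℕ → ℝ := fun n => ∑ t ∈ Icc 1 n, I t with hNdef
  have hI01 : ∀ t, I t = 0 ∨ I t = 1 := by
    intro t; rw [hI t]; split <;> simp
  have hI0 : ∀ t, 0 ≤ I t := by
    intro t; rcases hI01 t with h | h <;> simp [h]
  have hIle1 : ∀ t, I t ≤ 1 := by
    intro t; rcases hI01 t with h | h <;> simp [h]
  have hN0 : ∀ n, 0 ≤ N n := fun n => Finset.sum_nonneg fun t _ => hI0 t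
  have hNle : ∀ n : ℕ, N n ≤ n := by
    intro n
    calc N n ≤ (Icc 1 n).card • (1:ℝ) :=
          Finset.sum_le_card_nsmul _ _ _ (fun t _ => hIle1 t)
    _ = n := by simp [Nat.card_Icc]
  have hX0 : ∀ n, 0 ≤ X n := fun n => Finset.sum_nonneg fun t _ => hx t
  have hY0 : ∀ n, 0 ≤ Y n := fun n => Finset.sum_nonneg fun t _ => hy t
  -- global telescopes
  have hXN : ∀ n : ℕ, u (n+1) = X n - N n := by
    intro n
    have := tele_aux hurec 0 n (Nat.zero_le n)
    simpa [hu1, hXdef, hNdef] using this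
  have hYN : ∀ n : ℕ, v (n+1) = Y n - N n := by
    intro n
    have := tele_aux hvrec 0 n (Nat.zero_le n)
    simpa [hv1, hYdef, hNdef] using this
  -- nonnegativity of u, v
  have huv0 : ∀ t, 1 ≤ t → 0 ≤ u t ∧ 0 ≤ v t := by
    intro t ht
    induction t with
    | zero => omega
    | succ t ih =>
        rcases Nat.lt_or_ge t 1 with h | h
        · have : t = 0 := by omega
          subst this
          constructor <;> simp [hu1, hv1]
        · obtain ⟨hut, hvt⟩ := ih h
          have hIu : I t ≤ u t ∧ I t ≤ v t := by
            rw [hI t]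
            split
            · next hc => exact ⟨hc.1, hc.2⟩
            · simp [hut, hvt]
          constructor
          · rw [hurec t h]; have := hx t; linarith [hIu.1]
          · rw [hvrec t h]; have := hy t; linarith [hIu.2]
  rcases le_or_gt rS 1 with hrS1 | hrS1
  · -- subcritical case : N n / n → rS
    have hmin : min 1 rS = rS := min_eq_right hrS1
    rw [hmin]
    -- main claim
    have claim : ∀ ε : ℝ, 0 < ε → ∃ C : ℝ, 0 ≤ C ∧ ∃ K : ℕ, ∀ n ≥ K, u (n+1) ≤ C + 5*ε*n := by
      intro ε hε
      -- choose K with good sum bounds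
      have hXev : ∀ᶠ n : ℕ in atTop, |X n / n - rS| < ε :=
        (hX.sub tendsto_const_nhds).abs.eventually (eventually_lt_nhds (by simpa using hε))
      have hYev : ∀ᶠ n : ℕ in atTop, |Y n / n - rD| < ε :=
        (hY.sub tendsto_const_nhds).abs.eventually (eventually_lt_nhds (by simpa using hε))
      obtain ⟨K0, hK0⟩ := (hXev.and hYev).exists_forall_of_atTop
      set K := max K0 1 with hK
      have hKbound : ∀ n : ℕ, K ≤ n → |X n - rS * n| ≤ ε * n ∧ |Y n - rD * n| ≤ ε * n := by
        intro n hn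
        have hn1 : 1 ≤ n := le_trans (le_max_right _ _) hn
        have hnpos : (0:ℝ) < n := by exact_mod_cast hn1
        obtain ⟨h1, h2⟩ := hK0 n (le_trans (le_max_left _ _) hn)
        have he1 : (X n / n - rS) * n = X n - rS * n := by
          rw [sub_mul, div_mul_cancel₀ _ hnpos.ne']
        have he2 : (Y n / n - rD) * n = Y n - rD * n := by
          rw [sub_mul, div_mul_cancel₀ _ hnpos.ne']
        constructor
        · calc |X n - rS * n| = |X n / n - rS| * n := by
                rw [← he1, abs_mul, abs_of_pos hnpos]
          _ ≤ ε * n := mul_le_mul_of_nonneg_right (le_of_lt h1) (le_of_lt hnpos)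
        · calc |Y n - rD * n| = |Y n / n - rD| * n := by
                rw [← he2, abs_mul, abs_of_pos hnpos]
          _ ≤ ε * n := mul_le_mul_of_nonneg_right (le_of_lt h2) (le_of_lt hnpos)
      have huK2 : 0 ≤ u (K+2) := (huv0 (K+2) (by omega)).1
      refine ⟨u (K+2) + K + 4, by positivity, K + 2, ?_⟩
      intro n hn
      have hnK := hKbound n (by omega)
      have hXn := abs_le.mp hnK.1
      have hYn := abs_le.mp hnK.2
      have hn1 : (1:ℝ) ≤ (n:ℝ) := by exact_mod_cast (by omega : 1 ≤ n)
      set S : Set ℕ := {s | K + 2 ≤ s ∧ ∀ t, s ≤ t → t ≤ n → I t = 1} with hSdef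
      have hSne : (n+1) ∈ S := ⟨by omega, fun t ht1 ht2 => by omega⟩
      have ht0mem : sInf S ∈ S := Nat.sInf_mem ⟨n+1, hSne⟩
      have ht0le : sInf S ≤ n + 1 := Nat.sInf_le hSne
      have hKt0 : K + 2 ≤ sInf S := ht0mem.1
      have hones : ∀ t, sInf S ≤ t → t ≤ n → I t = 1 := ht0mem.2
      -- generic u-side estimate
      have hu_est : ∀ b : ℕ, K ≤ b → b + 1 ≤ n + 1 → u (b+1) ≤ u (K+2) + 1 →
          ((n:ℝ) - b - 1 ≤ ∑ t ∈ Icc (b+1) n, I t) → u (n+1) ≤ u (K+2) + 2 + 2*ε*(n:ℝ) := by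
        intro b hKb hbn hub hsumI
        have hbn' : b ≤ n := by omega
        have hbnR : (b:ℝ) ≤ (n:ℝ) := by exact_mod_cast hbn'
        have hbR0 : (0:ℝ) ≤ (b:ℝ) := by positivity
        have htel := tele_aux hurec b n hbn'
        have hxsplit : ∑ t ∈ Icc (b+1) n, x t = X n - X b := by
          have := sum_Icc_split x b n hbn'
          simp only [hXdef]
          linarith [this]
        have hXb := abs_le.mp (hKbound b hKb).1
        have hkey : rS*(n:ℝ) - rS*(b:ℝ) - ((n:ℝ) - (b:ℝ)) ≤ 0 := by
          nlinarith [mul_nonneg (sub_nonneg.mpr hrS1) (sub_nonneg.mpr hbnR)]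
        have hεb : ε*(b:ℝ) ≤ ε*(n:ℝ) := by
          apply mul_le_mul_of_nonneg_left hbnR (le_of_lt hε)
        rw [htel, hxsplit]
        linarith [hXn.2, hXb.1, hsumI]
      -- generic v-side estimate
      have hv_est : ∀ b : ℕ, K ≤ b → b + 1 ≤ n + 1 → v (b+1) ≤ 1 →
          ((n:ℝ) - b - 1 ≤ ∑ t ∈ Icc (b+1) n, I t) → u (n+1) ≤ 2 + 4*ε*(n:ℝ) := by
        intro b hKb hbn hvb hsumI
        have hbn' : b ≤ n := by omega
        have hbnR : (b:ℝ) ≤ (n:ℝ) := by exact_mod_cast hbn'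
        have hbR0 : (0:ℝ) ≤ (b:ℝ) := by positivity
        have hnR0 : (0:ℝ) ≤ (n:ℝ) := by positivity
        have htel := tele_aux hvrec b n hbn'
        have hysplit : ∑ t ∈ Icc (b+1) n, y t = Y n - Y b := by
          have := sum_Icc_split y b n hbn'
          simp only [hYdef]
          linarith [this]
        have hYb := abs_le.mp (hKbound b hKb).2
        have hεb : ε*(b:ℝ) ≤ ε*(n:ℝ) := by
          apply mul_le_mul_of_nonneg_left hbnR (le_of_lt hε)
        -- v (n+1) bound
        have hvn : v (n+1) ≤ 2 + (rD*(n:ℝ) - rD*(b:ℝ) - ((n:ℝ) - (b:ℝ))) + 2*ε*(n:ℝ) := by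
          rw [htel, hysplit]
          linarith [hYn.2, hYb.1, hsumI]
        -- transfer to u via the bracket estimate
        have hbr : rD*(n:ℝ) - rD*(b:ℝ) - ((n:ℝ) - (b:ℝ)) + (rS - rD)*(n:ℝ) ≤ 0 := by
          rcases le_or_gt rD 1 with h | h
          · nlinarith [mul_nonneg (sub_nonneg.mpr h) (sub_nonneg.mpr hbnR),
              mul_nonneg (sub_nonneg.mpr hrr) hnR0]
          · nlinarith [mul_nonneg (sub_nonneg.mpr (le_of_lt h)) hbR0,
              mul_nonneg (sub_nonneg.mpr hrS1) hnR0]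
        have huveq : u (n+1) = v (n+1) + (X n - Y n) := by
          rw [hXN n, hYN n]; ring
        rw [huveq]
        linarith [hXn.2, hYn.1, hvn]
      rcases eq_or_lt_of_le hKt0 with heq | hlt
      · -- the run of ones extends back to K+2
        have hsumI : ((n:ℝ) - (K+1) - 1 ≤ ∑ t ∈ Icc (K+2) n, I t) := by
          have h1 : ∑ t ∈ Icc (K+2) n, I t = ((n + 1 - (K+2) : ℕ) : ℝ) :=
            sum_Icc_ones I (fun t ht1 ht2 => hones t (by omega) ht2) (by omega)
          rw [h1]
          have : ((n + 1 - (K+2) : ℕ) : ℝ) = (n:ℝ) - K - 1 := by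
            rw [show n + 1 - (K+2) = n - (K+1) from by omega,
              Nat.cast_sub (by omega : K + 1 ≤ n)]
            push_cast
            ring
          rw [this]
          push_cast
          linarith
        have := hu_est (K+1) (by omega) (by omega) (by norm_num [show K+1+1 = K+2 from rfl]) (by
          have : K + 1 + 1 = K + 2 := rfl
          rw [this]
          push_cast
          push_cast at hsumI
          linarith)
        have hKR0 : (0:ℝ) ≤ (K:ℝ) := by positivity
        have hεn : 0 ≤ ε*(n:ℝ) := by positivity
        linarith
      · -- there is a failure just before the run
        obtain ⟨b, hb⟩ : ∃ b : ℕ, sInf S = b + 2 := ⟨sInf S - 2, by omega⟩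
        have hbK : K + 1 ≤ b := by omega
        have hnotmem : (b+1) ∉ S := Nat.notMem_of_lt_sInf (by omega)
        have hfail : ∃ t, b + 1 ≤ t ∧ t ≤ n ∧ I t ≠ 1 := by
          by_contra hc
          push_neg at hc
          exact hnotmem ⟨by omega, fun t ht1 ht2 => hc t ht1 ht2⟩
        obtain ⟨t, ht1, ht2, ht3⟩ := hfail
        have htb : t = b + 1 := by
          rcases Nat.lt_or_ge t (b+2) with h | h
          · omega
          · exact absurd (hones t (by omega) ht2) ht3
        subst htb
        have hIb : I (b+1) = 0 := by rcases hI01 (b+1) with h | h; exact h; exact absurd h ht3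
        have hcond : ¬(1 ≤ u (b+1) ∧ 1 ≤ v (b+1)) := by
          intro hc
          rw [hI (b+1), if_pos hc] at hIb
          norm_num at hIb
        have hsumI : ((n:ℝ) - b - 1 ≤ ∑ t ∈ Icc (b+1) n, I t) := by
          have hsub : ∑ t ∈ Icc (b+2) n, I t ≤ ∑ t ∈ Icc (b+1) n, I t := by
            apply Finset.sum_le_sum_of_subset_of_nonneg
            · intro z hz
              rw [Finset.mem_Icc] at *
              omega
            · intro z _ _
              exact hI0 z
          have h1 : ∑ t ∈ Icc (b+2) n, I t = ((n + 1 - (b+2) : ℕ) : ℝ) :=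
            sum_Icc_ones I (fun t ht1' ht2' => hones t (by omega) ht2') (by omega)
          have h2 : ((n + 1 - (b+2) : ℕ) : ℝ) = (n:ℝ) - b - 1 := by
            rw [show n + 1 - (b+2) = n - (b+1) from by omega,
              Nat.cast_sub (by omega : b + 1 ≤ n)]
            push_cast
            ring
          rw [h1, h2] at hsub
          linarith [hsub]
        push_neg at hcond
        rcases lt_or_ge (u (b+1)) 1 with hub | hub
        · have := hu_est b (by omega) (by omega) (by linarith [huK2]) hsumI
          have hKR0 : (0:ℝ) ≤ (K:ℝ) := by positivity
          have hεn : 0 ≤ ε*(n:ℝ) := by positivity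
          linarith
        · have hvb : v (b+1) < 1 := hcond hub
          have := hv_est b (by omega) (by omega) (le_of_lt hvb) hsumI
          have hKR0 : (0:ℝ) ≤ (K:ℝ) := by positivity
          have hεn : 0 ≤ ε*(n:ℝ) := by positivity
          linarith
    -- conclude: u(n+1)/n → 0 and N n/n → rS
    have hu0 : Tendsto (fun n : ℕ => u (n+1) / n) atTop (nhds 0) := by
      rw [Metric.tendsto_atTop]
      intro δ hδ
      obtain ⟨C, hC0, K, hK⟩ := claim (δ/10) (by positivity)
      obtain ⟨N0, hN0'⟩ := exists_nat_gt (C/(δ/2))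
      refine ⟨max K (N0 + 1), fun n hn => ?_⟩
      have hnK : K ≤ n := le_trans (le_max_left _ _) hn
      have hnN : N0 + 1 ≤ n := le_trans (le_max_right _ _) hn
      have hn1 : (1:ℝ) ≤ n := by exact_mod_cast (by omega : 1 ≤ n)
      have hnpos : (0:ℝ) < n := by linarith
      have hub := hK n hnK
      have hun0 : 0 ≤ u (n+1) := (huv0 (n+1) (by omega)).1
      rw [Real.dist_eq, sub_zero, abs_of_nonneg (by positivity)]
      have hCn : C < (δ/2) * n := by
        have hNn : (N0:ℝ) < n := by exact_mod_cast (by omega : N0 < n)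
        have := (div_lt_iff₀ (by positivity : (0:ℝ) < δ/2)).mp hN0'
        nlinarith
      rw [div_lt_iff₀ hnpos]
      calc u (n+1) ≤ C + 5*(δ/10)*n := hub
      _ < (δ/2)*n + (δ/2)*n := by nlinarith
      _ = δ * n := by ring
    have hfinal : ∀ n : ℕ, N n / n = X n / n - u (n+1)/n := by
      intro n
      rw [hXN n]
      ring
    have hcomb := hX.sub hu0
    rw [sub_zero] at hcomb
    exact Tendsto.congr (fun n => (hfinal n).symm) hcomb
  · -- supercritical case : N n / n → 1
    have hmin : min 1 rS = 1 := min_eq_left (le_of_lt hrS1)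
    rw [hmin]
    have hδpos : (0:ℝ) < (rS - 1)/2 := by linarith
    set δ := (rS - 1)/2 with hδdef
    have hXev : ∀ᶠ n : ℕ in atTop, 1 + δ < X n / n :=
      hX.eventually (eventually_gt_nhds (by simp only [hδdef]; linarith))
    have hYev : ∀ᶠ n : ℕ in atTop, 1 + δ < Y n / n :=
      hY.eventually (eventually_gt_nhds (by simp only [hδdef]; linarith))
    obtain ⟨M0, hM0⟩ := (hXev.and hYev).exists_forall_of_atTop
    obtain ⟨M1, hM1⟩ := exists_nat_gt (1/δ)
    set M := max (max M0 M1) 1 with hMdef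
    have hM1M : (M1:ℝ) ≤ (M:ℝ) := by
      exact_mod_cast le_trans (le_max_right M0 M1) (le_max_left _ _)
    have hIone : ∀ t, M + 1 ≤ t → I t = 1 := by
      intro t ht
      obtain ⟨s, rfl⟩ : ∃ s, t = s + 1 := ⟨t - 1, by omega⟩
      have hsM : M ≤ s := by omega
      have hs1 : 1 ≤ s := le_trans (le_max_right _ _) hsM
      have hspos : (0:ℝ) < s := by exact_mod_cast hs1
      have hMs : (M:ℝ) ≤ (s:ℝ) := by exact_mod_cast hsM
      obtain ⟨hXs, hYs⟩ := hM0 s (le_trans (le_trans (le_max_left _ _) (le_max_left _ _)) hsM)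
      have h1 : (1+δ) * s < X s := (lt_div_iff₀ hspos).mp hXs
      have h1' : (1+δ) * s < Y s := (lt_div_iff₀ hspos).mp hYs
      have hδM1 : 1 < (M1:ℝ) * δ := (div_lt_iff₀ hδpos).mp hM1
      have hδs : 1 ≤ δ * s := by
        have : δ * (M1:ℝ) ≤ δ * s := by
          apply mul_le_mul_of_nonneg_left (le_trans hM1M hMs) (le_of_lt hδpos)
        nlinarith
      have hu : 1 ≤ u (s+1) := by
        rw [hXN s]
        have := hNle s
        nlinarith
      have hv : 1 ≤ v (s+1) := by
        rw [hYN s]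
        have := hNle s
        nlinarith
      rw [hI (s+1), if_pos ⟨hu, hv⟩]
    have hlow : ∀ n : ℕ, M + 1 ≤ n → ((n:ℝ) - M)/n ≤ N n / n := by
      intro n hn
      have hnpos : (0:ℝ) < n := by exact_mod_cast (by omega : 0 < n)
      have hkey : (n:ℝ) - M ≤ N n := by
        have hsub : ∑ t ∈ Icc (M+1) n, I t ≤ N n := by
          apply Finset.sum_le_sum_of_subset_of_nonneg
          · intro z hz
            rw [Finset.mem_Icc] at *
            omega
          · intro z _ _
            exact hI0 z
        have h1 : ∑ t ∈ Icc (M+1) n, I t = ((n + 1 - (M+1) : ℕ) : ℝ) :=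
          sum_Icc_ones I (fun t ht1 _ => hIone t ht1) (by omega)
        have h2 : ((n + 1 - (M+1) : ℕ) : ℝ) = (n:ℝ) - M := by
          rw [show n + 1 - (M+1) = n - M from by omega,
            Nat.cast_sub (by omega : M ≤ n)]
        rw [h1, h2] at hsub
        exact hsub
      gcongr
    apply tendsto_of_tendsto_of_tendsto_of_le_of_le'
      (g := fun n : ℕ => ((n:ℝ) - M)/n) (h := fun _ : ℕ => (1:ℝ))
    · have h2 : Tendsto (fun n : ℕ => (M:ℝ) * (1/n)) atTop (nhds 0) := by
        have h0 := tendsto_one_div_atTop_nhds_zero_nat (𝕜 := ℝ)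
        have h2 := h0.const_mul (M:ℝ)
        rwa [mul_zero] at h2
      have h1 : Tendsto (fun n : ℕ => 1 - (M:ℝ) * (1/n)) atTop (nhds 1) := by
        have h3 := (tendsto_const_nhds (x := (1:ℝ)) (f := atTop (α := ℕ))).sub h2
        rwa [sub_zero] at h3
      apply h1.congr'
      filter_upwards [eventually_ge_atTop 1] with n hn
      have hnne : (n:ℝ) ≠ 0 := by
        have : (0:ℝ) < n := by exact_mod_cast (by omega : 0 < n)
        exact this.ne'
      field_simp
    · exact tendsto_const_nhds
    · filter_upwards [eventually_ge_atTop (M+1)] with n hn using hlow n hn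
    · filter_upwards [eventually_ge_atTop 1] with n hn
      have hnpos : (0:ℝ) < n := by exact_mod_cast (by omega : 0 < n)
      rw [div_le_one hnpos]
      exact hNle n

end Queue

section Glue
set_option linter.unusedSectionVars false
variable {Ω : Type*} [MeasurableSpace Ω] {μ : Measure Ω} [IsProbabilityMeasure μ]
  {T : Ω → Ω}

lemma icc_of_bsum (f : Ω → ℝ) (ω : Ω) (m : ℝ)
    (h : Tendsto (fun n => bsum T f n ω / n) atTop (nhds m)) :
    Tendsto (fun n : ℕ => (∑ t ∈ Finset.Icc 1 n, f (T^[t] ω)) / n) atTop (nhds m) := by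
  have hshift : Tendsto (fun n : ℕ => bsum T f (n+1) ω / (n+1)) atTop (nhds m) := by
    have h0 := h.comp (tendsto_add_atTop_nat 1)
    refine h0.congr fun n => ?_
    simp only [Function.comp_apply]
    push_cast
    ring
  have hfrac : Tendsto (fun n : ℕ => ((n:ℝ)+1)/n) atTop (nhds 1) := by
    have h2 : Tendsto (fun n : ℕ => 1 + 1/(n:ℝ)) atTop (nhds 1) := by
      have := (tendsto_const_nhds (x := (1:ℝ)) (f := atTop (α := ℕ))).add
        tendsto_one_div_atTop_nhds_zero_nat
      rwa [add_zero] at this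
    apply h2.congr'
    filter_upwards [eventually_ge_atTop 1] with n hn
    have hnne : (n:ℝ) ≠ 0 := by
      have : (0:ℝ) < n := by exact_mod_cast (by omega : 0 < n)
      exact this.ne'
    field_simp
  have hz : Tendsto (fun n : ℕ => f ω * (1/(n:ℝ))) atTop (nhds 0) := by
    have := tendsto_one_div_atTop_nhds_zero_nat.const_mul (f ω)
    rwa [mul_zero] at this
  have hcomb := (hshift.mul hfrac).sub hz
  rw [mul_one, sub_zero] at hcomb
  apply hcomb.congr'
  filter_upwards [eventually_ge_atTop 1] with n hn
  have hnne : (n:ℝ) ≠ 0 := by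
    have : (0:ℝ) < n := by exact_mod_cast (by omega : 0 < n)
    exact this.ne'
  have h1 : ∑ t ∈ Finset.Icc 1 n, f (T^[t] ω) = ∑ i ∈ Finset.range n, f (T^[i+1] ω) := by
    rw [← Finset.Ico_add_one_right_eq_Icc, Finset.sum_Ico_eq_sum_range]
    simp [Nat.add_comm]
  have hsplit : bsum T f (n+1) ω = f ω + ∑ t ∈ Finset.Icc 1 n, f (T^[t] ω) := by
    unfold bsum
    rw [Finset.sum_range_succ', h1]
    simp only [Function.iterate_zero_apply]
    rw [add_comm]
  have hn1 : ((n:ℝ)+1) ≠ 0 := by positivity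
  field_simp [hsplit]
  linarith [hsplit]

end Glue


/-- Proposition 1: Under the joint threshold policy with
infinite batteries and stationary ergodic arrivals (means λ_S, λ_D), the
simultaneous transmit-and-receive probability Ψ satisfies
Ψ ≤ min(λ_S/P_S, λ_D/P_D), with equality if max(λ_S/P_S, λ_D/P_D) < 1. -/
theorem stmt12 {Ω : Type*} [MeasurableSpace Ω] (μ : Measure Ω)
    [IsProbabilityMeasure μ]
    (T : Ω → Ω) (hT : Ergodic T μ)
    (ES0 ED0 : Ω → ℝ)
    (hESmeas : Measurable ES0) (hEDmeas : Measurable ED0)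
    (hESnonneg : ∀ ω, 0 ≤ ES0 ω) (hEDnonneg : ∀ ω, 0 ≤ ED0 ω)
    (hESint : Integrable ES0 μ) (hEDint : Integrable ED0 μ)
    (lamS lamD : ℝ)
    (hlamS : ∫ ω, ES0 ω ∂μ = lamS) (hlamD : ∫ ω, ED0 ω ∂μ = lamD)
    (PS PD : ℝ) (hPS : 0 < PS) (hPD : 0 < PD)
    (BS BD : ℕ → Ω → ℝ)
    (hBS1 : ∀ ω, BS 1 ω = 0) (hBD1 : ∀ ω, BD 1 ω = 0)
    (hBSrec : ∀ t, 1 ≤ t → ∀ ω, BS (t + 1) ω =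
      BS t ω - (if PS ≤ BS t ω ∧ PD ≤ BD t ω then PS else 0) + ES0 (T^[t] ω))
    (hBDrec : ∀ t, 1 ≤ t → ∀ ω, BD (t + 1) ω =
      BD t ω - (if PS ≤ BS t ω ∧ PD ≤ BD t ω then PD else 0) + ED0 (T^[t] ω)) :
    ∃ Psi : ℝ,
      Tendsto
        (fun n : ℕ => (1 / (n : ℝ)) * ∑ t ∈ Finset.Icc 1 n,
          ∫ ω, (if PS ≤ BS t ω ∧ PD ≤ BD t ω then (1 : ℝ) else 0) ∂μ)
        atTop (nhds Psi) ∧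
      Psi ≤ min (lamS / PS) (lamD / PD) ∧
      (max (lamS / PS) (lamD / PD) < 1 → Psi = min (lamS / PS) (lamD / PD)) := by
  have hTm : Measurable T := hT.measurable
  set Psi : ℝ := min 1 (min (lamS / PS) (lamD / PD)) with hPsidef
  -- measurability of batteries
  have hmeas : ∀ t : ℕ, 1 ≤ t → Measurable (BS t) ∧ Measurable (BD t) := by
    intro t ht
    induction t with
    | zero => omega
    | succ t ih =>
        rcases Nat.lt_or_ge t 1 with h | h
        · have : t = 0 := by omega
          subst this
          constructor
          · have h1 : BS 1 = fun _ => (0:ℝ) := funext hBS1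
            rw [h1]; exact measurable_const
          · have h1 : BD 1 = fun _ => (0:ℝ) := funext hBD1
            rw [h1]; exact measurable_const
        · obtain ⟨h1, h2⟩ := ih h
          have hset : MeasurableSet {ω | PS ≤ BS t ω ∧ PD ≤ BD t ω} :=
            (measurableSet_le measurable_const h1).inter
              (measurableSet_le measurable_const h2)
          constructor
          · have he : BS (t+1) = fun ω => BS t ω -
                (if PS ≤ BS t ω ∧ PD ≤ BD t ω then PS else 0) + ES0 (T^[t] ω) :=
              funext (hBSrec t h)
            rw [he]
            exact (h1.sub (Measurable.ite hset measurable_const measurable_const)).add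
              (hESmeas.comp (hTm.iterate t))
          · have he : BD (t+1) = fun ω => BD t ω -
                (if PS ≤ BS t ω ∧ PD ≤ BD t ω then PD else 0) + ED0 (T^[t] ω) :=
              funext (hBDrec t h)
            rw [he]
            exact (h2.sub (Measurable.ite hset measurable_const measurable_const)).add
              (hEDmeas.comp (hTm.iterate t))
  have hsetmeas : ∀ t : ℕ, 1 ≤ t → MeasurableSet {ω | PS ≤ BS t ω ∧ PD ≤ BD t ω} := by
    intro t ht
    obtain ⟨h1, h2⟩ := hmeas t ht
    exact (measurableSet_le measurable_const h1).inter (measurableSet_le measurable_const h2)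
  -- a.e. pathwise convergence
  have hES := birkhoff_ae hT hESmeas hESint
  have hED := birkhoff_ae hT hEDmeas hEDint
  rw [hlamS] at hES
  rw [hlamD] at hED
  have hae : ∀ᵐ ω ∂μ, Tendsto
      (fun n : ℕ => (∑ t ∈ Finset.Icc 1 n,
        (if PS ≤ BS t ω ∧ PD ≤ BD t ω then (1:ℝ) else 0)) / n) atTop (nhds Psi) := by
    filter_upwards [hES, hED] with ω hSω hDω
    have hXI := icc_of_bsum ES0 ω lamS hSω
    have hYI := icc_of_bsum ED0 ω lamD hDω
    -- scaled versions
    have hXs : Tendsto (fun n : ℕ =>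
        (∑ t ∈ Finset.Icc 1 n, ES0 (T^[t] ω) / PS) / n) atTop (nhds (lamS / PS)) := by
      have := hXI.div_const PS
      refine this.congr fun n => ?_
      rw [← Finset.sum_div, div_right_comm]
    have hYs : Tendsto (fun n : ℕ =>
        (∑ t ∈ Finset.Icc 1 n, ED0 (T^[t] ω) / PD) / n) atTop (nhds (lamD / PD)) := by
      have := hYI.div_const PD
      refine this.congr fun n => ?_
      rw [← Finset.sum_div, div_right_comm]
    set x : ℕ → ℝ := fun t => ES0 (T^[t] ω) / PS with hxdef
    set y : ℕ → ℝ := fun t => ED0 (T^[t] ω) / PD with hydef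
    set u : ℕ → ℝ := fun t => BS t ω / PS with hudef
    set v : ℕ → ℝ := fun t => BD t ω / PD with hvdef
    set I : ℕ → ℝ := fun t => if PS ≤ BS t ω ∧ PD ≤ BD t ω then (1:ℝ) else 0 with hIdef
    have hx : ∀ t, 0 ≤ x t := fun t => div_nonneg (hESnonneg _) (le_of_lt hPS)
    have hy : ∀ t, 0 ≤ y t := fun t => div_nonneg (hEDnonneg _) (le_of_lt hPD)
    have hu1 : u 1 = 0 := by simp [hudef, hBS1 ω]
    have hv1 : v 1 = 0 := by simp [hvdef, hBD1 ω]
    have hcond : ∀ t, (PS ≤ BS t ω ∧ PD ≤ BD t ω) ↔ (1 ≤ u t ∧ 1 ≤ v t) := by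
      intro t
      rw [hudef, hvdef]
      simp only
      rw [one_le_div hPS, one_le_div hPD]
    have hI : ∀ t, I t = if 1 ≤ u t ∧ 1 ≤ v t then 1 else 0 := by
      intro t
      rw [hIdef]
      simp only
      exact if_congr (hcond t) rfl rfl
    have hI' : ∀ t, I t = if 1 ≤ v t ∧ 1 ≤ u t then 1 else 0 := by
      intro t
      rw [hI t]
      exact if_congr and_comm rfl rfl
    have hdivPS : ∀ c : Prop, ∀ inst : Decidable c,
        (if c then PS else 0) / PS = if c then (1:ℝ) else 0 := by
      intro c inst
      split
      · exact div_self hPS.ne'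
      · exact zero_div PS
    have hdivPD : ∀ c : Prop, ∀ inst : Decidable c,
        (if c then PD else 0) / PD = if c then (1:ℝ) else 0 := by
      intro c inst
      split
      · exact div_self hPD.ne'
      · exact zero_div PD
    have hurec : ∀ t, 1 ≤ t → u (t+1) = u t - I t + x t := by
      intro t ht
      show BS (t+1) ω / PS = BS t ω / PS - I t + ES0 (T^[t] ω) / PS
      rw [hBSrec t ht ω, add_div, sub_div, hdivPS _ _]
    have hvrec : ∀ t, 1 ≤ t → v (t+1) = v t - I t + y t := by
      intro t ht
      show BD (t+1) ω / PD = BD t ω / PD - I t + ED0 (T^[t] ω) / PD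
      rw [hBDrec t ht ω, add_div, sub_div, hdivPD _ _]
    rcases le_total (lamS / PS) (lamD / PD) with hc | hc
    · have := queue_lemma x y I u v hx hy hu1 hv1 hI hurec hvrec
        (lamS / PS) (lamD / PD) hc hXs hYs
      rw [hPsidef, min_eq_left hc]
      exact this
    · have := queue_lemma y x I v u hy hx hv1 hu1 hI' hvrec hurec
        (lamD / PD) (lamS / PS) hc hYs hXs
      rw [hPsidef, min_eq_right hc]
      exact this
  -- dominated convergence
  refine ⟨Psi, ?_, ?_, ?_⟩
  · have hInt : ∀ t : ℕ, 1 ≤ t →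
        Integrable (fun ω => if PS ≤ BS t ω ∧ PD ≤ BD t ω then (1:ℝ) else 0) μ := by
      intro t ht
      have : (fun ω => if PS ≤ BS t ω ∧ PD ≤ BD t ω then (1:ℝ) else 0) =
          Set.indicator {ω | PS ≤ BS t ω ∧ PD ≤ BD t ω} (fun _ => (1:ℝ)) := by
        funext ω
        rw [Set.indicator_apply]
        rfl
      rw [this]
      exact (integrable_const (1:ℝ)).indicator (hsetmeas t ht)
    have hDCT : Tendsto (fun n : ℕ => ∫ ω, (1/(n:ℝ)) * ∑ t ∈ Finset.Icc 1 n,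
        (if PS ≤ BS t ω ∧ PD ≤ BD t ω then (1:ℝ) else 0) ∂μ) atTop (nhds Psi) := by
      have h := tendsto_integral_of_dominated_convergence (μ := μ)
        (F := fun n ω => (1/(n:ℝ)) * ∑ t ∈ Finset.Icc 1 n,
          (if PS ≤ BS t ω ∧ PD ≤ BD t ω then (1:ℝ) else 0))
        (f := fun _ => Psi) (bound := fun _ => (1:ℝ))
        ?_ (integrable_const 1) ?_ ?_
      · have hint : ∫ (_ : Ω), Psi ∂μ = Psi := by simp
        rwa [hint] at h
      · intro n
        apply Measurable.aestronglyMeasurable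
        apply Measurable.const_mul
        apply Finset.measurable_sum
        intro t ht
        have ht1 : 1 ≤ t := (Finset.mem_Icc.mp ht).1
        exact Measurable.ite (hsetmeas t ht1) measurable_const measurable_const
      · intro n
        filter_upwards with ω
        rcases Nat.eq_zero_or_pos n with hn | hn
        · subst hn
          simp
        · have hnpos : (0:ℝ) < n := by exact_mod_cast hn
          have hsum0 : 0 ≤ ∑ t ∈ Finset.Icc 1 n,
              (if PS ≤ BS t ω ∧ PD ≤ BD t ω then (1:ℝ) else 0) :=
            Finset.sum_nonneg fun t _ => by split <;> norm_num
          have hsumn : ∑ t ∈ Finset.Icc 1 n,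
              (if PS ≤ BS t ω ∧ PD ≤ BD t ω then (1:ℝ) else 0) ≤ n := by
            calc _ ≤ (Finset.Icc 1 n).card • (1:ℝ) :=
                  Finset.sum_le_card_nsmul _ _ _ (fun t _ => by split <;> norm_num)
            _ = n := by simp [Nat.card_Icc]
          rw [Real.norm_eq_abs, abs_of_nonneg (by positivity)]
          rw [div_mul_eq_mul_div, one_mul, div_le_one hnpos]
          exact hsumn
      · filter_upwards [hae] with ω hω
        refine hω.congr fun n => ?_
        rw [div_mul_eq_mul_div, one_mul]
    refine hDCT.congr fun n => ?_
    rw [← integral_finset_sum _ (fun t ht => hInt t (Finset.mem_Icc.mp ht).1),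
      ← integral_const_mul]
  · rw [hPsidef]
    exact min_le_right _ _
  · intro hmax
    rw [hPsidef]
    apply min_eq_right
    apply le_of_lt
    exact lt_of_le_of_lt (le_trans (min_le_left _ _) (le_max_left _ _)) hmax
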